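/- Let G be an (n−3)-regular simple graph of order n ≥ 5 with G not isomorphic to a complete multipartite graph K_{3,3,...,3} all of whose parts have size 3. Then the Roman bondage number of G equals n − 2. -/

import Mathlib

open SimpleGraph

/-- The Roman domination number: the minimum weight of a Roman dominating function,
i.e. a function `f : V → ℕ` with values in `{0,1,2}` such that every vertex with
value `0` has a neighbor with value `2`. -/
noncomputable def romanDominationNumber {V : Type*} [Fintype V] (G : SimpleGraph V) : ℕ :=
  sInf {w | ∃ f : V → ℕ, (∀ v, f v ≤ 2) ∧
    (∀ v, f v = 0 → ∃ u, G.Adj v u ∧ f u = 2) ∧ w = ∑ v, f v}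

/-- The Roman bondage number: the minimum cardinality of a set `B` of edges of `G`
whose removal increases the Roman domination number. -/
noncomputable def romanBondageNumber {V : Type*} [Fintype V] (G : SimpleGraph V) : ℕ :=
  sInf {k | ∃ B : Finset (Sym2 V), ↑B ⊆ G.edgeSet ∧ B.card = k ∧
    romanDominationNumber G < romanDominationNumber (G.deleteEdges ↑B)}

set_option linter.unusedSectionVars false
namespace RB
open Finset
variable {V : Type*} [Fintype V] [DecidableEq V]

def IsRDF (G : SimpleGraph V) (f : V → ℕ) : Prop :=
  (∀ v, f v ≤ 2) ∧ (∀ v, f v = 0 → ∃ u, G.Adj v u ∧ f u = 2)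

lemma rdn_le {G : SimpleGraph V} {f : V → ℕ} (h : IsRDF G f) :
    romanDominationNumber G ≤ ∑ v, f v :=
  Nat.sInf_le ⟨f, h.1, h.2, rfl⟩

lemma rdn_spec (G : SimpleGraph V) : ∃ f, IsRDF G f ∧ ∑ v, f v = romanDominationNumber G := by
  have hne : {w | ∃ f : V → ℕ, (∀ v, f v ≤ 2) ∧
      (∀ v, f v = 0 → ∃ u, G.Adj v u ∧ f u = 2) ∧ w = ∑ v, f v}.Nonempty := by
    refine ⟨∑ v : V, (1 : ℕ), (fun _ => 1), fun v => one_le_two, fun v hv => by simp at hv, rfl⟩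
  obtain ⟨f, h1, h2, h3⟩ := Nat.sInf_mem hne
  exact ⟨f, ⟨h1, h2⟩, h3.symm⟩

lemma rdn_ge {G : SimpleGraph V} {k : ℕ} (h : ∀ f, IsRDF G f → k ≤ ∑ v, f v) :
    k ≤ romanDominationNumber G := by
  obtain ⟨f, hf, e⟩ := rdn_spec G
  exact e ▸ h f hf

lemma sum_supported {f : V → ℕ} {S : Finset V} (h : ∀ x, x ∉ S → f x = 0) :
    ∑ v, f v = ∑ v ∈ S, f v :=
  (Finset.sum_subset (Finset.subset_univ S) (fun x _ hx => h x hx)).symm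

lemma sum_three {f : V → ℕ} {a b c : V} (hab : a ≠ b) (hac : a ≠ c) (hbc : b ≠ c) :
    ∑ x ∈ ({a, b, c} : Finset V), f x = f a + f b + f c := by
  rw [Finset.sum_insert (by simp [hab, hac]), Finset.sum_insert (by simp [hbc]), Finset.sum_singleton, add_assoc]

/-- RDF of shape 2+1+1 -/
lemma rdn_le_four_two_one_one (G' : SimpleGraph V) (v a b : V)
    (hab : a ≠ b) (hav : a ≠ v) (hbv : b ≠ v)
    (hcov : ∀ x, x ≠ v → x ≠ a → x ≠ b → G'.Adj v x) :
    romanDominationNumber G' ≤ 4 := by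
  classical
  set f : V → ℕ := fun x => if x = v then 2 else if x = a ∨ x = b then 1 else 0 with hf
  have hfv : f v = 2 := by simp [hf]
  have hfa : f a = 1 := by simp [hf, hav]
  have hfb : f b = 1 := by simp [hf, hbv]
  have hsum : ∑ x, f x = 4 := by
    rw [sum_supported (S := {v, a, b}) (fun x hx => by
      simp only [Finset.mem_insert, Finset.mem_singleton, not_or] at hx
      simp [hf, hx.1, hx.2.1, hx.2.2])]
    rw [sum_three (fun h => hav h.symm) (fun h => hbv h.symm) hab, hfv, hfa, hfb]
  have hrdf : IsRDF G' f := by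
    constructor
    · intro x
      simp only [hf]
      split_ifs <;> omega
    · intro x hx
      have hxv : x ≠ v := fun e => by rw [e, hfv] at hx; omega
      have hxa : x ≠ a := fun e => by rw [e, hfa] at hx; omega
      have hxb : x ≠ b := fun e => by rw [e, hfb] at hx; omega
      exact ⟨v, (hcov x hxv hxa hxb).symm, hfv⟩
  calc romanDominationNumber G' ≤ ∑ x, f x := rdn_le hrdf
  _ = 4 := hsum

/-- RDF of shape 2+2 -/
lemma rdn_le_four_two_two (G' : SimpleGraph V) (u v : V) (huv : u ≠ v)
    (hcov : ∀ x, x ≠ u → x ≠ v → G'.Adj u x ∨ G'.Adj v x) :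
    romanDominationNumber G' ≤ 4 := by
  classical
  set f : V → ℕ := fun x => if x = u ∨ x = v then 2 else 0 with hf
  have hfu : f u = 2 := by simp [hf]
  have hfv : f v = 2 := by simp [hf]
  have hsum : ∑ x, f x = 4 := by
    rw [sum_supported (S := {u, v}) (fun x hx => by
      simp only [Finset.mem_insert, Finset.mem_singleton, not_or] at hx
      simp [hf, hx.1, hx.2])]
    rw [Finset.sum_pair huv, hfu, hfv]
  have hrdf : IsRDF G' f := by
    constructor
    · intro x; simp only [hf]; split_ifs <;> omega
    · intro x hx
      have hxu : x ≠ u := fun e => by rw [e, hfu] at hx; omega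
      have hxv : x ≠ v := fun e => by rw [e, hfv] at hx; omega
      rcases hcov x hxu hxv with h | h
      · exact ⟨u, h.symm, hfu⟩
      · exact ⟨v, h.symm, hfv⟩
  calc romanDominationNumber G' ≤ ∑ x, f x := rdn_le hrdf
  _ = 4 := hsum

lemma ge_five (G' : SimpleGraph V) [DecidableRel G'.Adj] (hcard : 5 ≤ Fintype.card V)
    (hnn : ∀ v : V, 3 ≤ (univ.filter (fun w => w ≠ v ∧ ¬ G'.Adj v w)).card)
    (hpair : ∀ u v : V, u ≠ v → ∃ w, w ≠ u ∧ w ≠ v ∧ ¬G'.Adj u w ∧ ¬G'.Adj v w) :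
    5 ≤ romanDominationNumber G' := by
  refine rdn_ge (fun f hf => ?_)
  by_contra hlt
  push_neg at hlt
  have hsle : ∑ x, f x ≤ 4 := by omega
  set T2 := univ.filter (fun x => f x = 2) with hT2
  have memT2 : ∀ x, x ∈ T2 ↔ f x = 2 := fun x => by simp [hT2]
  rcases Nat.lt_or_ge T2.card 2 with hc | hc
  · rcases Nat.eq_zero_or_pos T2.card with hc0 | hc1
    · -- no vertex with value 2: all values ≥ 1
      have h1 : ∀ x, 1 ≤ f x := by
        intro x
        rcases Nat.eq_zero_or_pos (f x) with h0 | h1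
        · obtain ⟨u, _, hu2⟩ := hf.2 x h0
          exact absurd (Finset.card_eq_zero.mp hc0 ▸ (memT2 u).mpr hu2) (by simp)
        · exact h1
      have : (Fintype.card V : ℕ) ≤ ∑ x, f x := by
        calc Fintype.card V = ∑ _x : V, 1 := by simp
        _ ≤ ∑ x, f x := Finset.sum_le_sum (fun i _ => h1 i)
      omega
    · -- exactly one vertex v with value 2
      obtain ⟨v, hv⟩ := Finset.card_pos.mp hc1
      have huniq : ∀ x, f x = 2 → x = v := by
        intro x hx
        by_contra hne
        have : 2 ≤ T2.card := Finset.one_lt_card.mpr ⟨x, (memT2 x).mpr hx, v, hv, hne⟩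
        omega
      have hfv : f v = 2 := (memT2 v).mp hv
      set Z := univ.filter (fun w => w ≠ v ∧ ¬ G'.Adj v w) with hZ
      have hZ1 : ∀ z ∈ Z, 1 ≤ f z := by
        intro z hz
        simp only [hZ, Finset.mem_filter] at hz
        rcases Nat.eq_zero_or_pos (f z) with h0 | h1
        · obtain ⟨u, hadj, hu2⟩ := hf.2 z h0
          rw [huniq u hu2] at hadj
          exact absurd hadj.symm hz.2.2
        · exact h1
      have hvZ : v ∉ Z := by simp [hZ]
      have : 2 + Z.card ≤ ∑ x, f x := by
        calc 2 + Z.card = f v + ∑ _z ∈ Z, 1 := by rw [hfv]; simp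
        _ ≤ f v + ∑ z ∈ Z, f z := by
              exact Nat.add_le_add_left (Finset.sum_le_sum hZ1) _
        _ = ∑ z ∈ insert v Z, f z := (Finset.sum_insert hvZ).symm
        _ ≤ ∑ x, f x := Finset.sum_le_sum_of_subset (Finset.subset_univ _)
      have h3 : 3 ≤ Z.card := by rw [hZ]; exact hnn v
      omega
  · -- two vertices with value 2
    obtain ⟨u, hu, v, hv, huv⟩ := Finset.one_lt_card.mp hc
    obtain ⟨w, hwu, hwv, hnu, hnv⟩ := hpair u v huv
    have hfu := (memT2 u).mp hu
    have hfv := (memT2 v).mp hv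
    rcases Nat.eq_zero_or_pos (f w) with h0 | h1
    · obtain ⟨x, hadj, hx2⟩ := hf.2 w h0
      have hxu : x ≠ u := fun e => hnu (e ▸ hadj).symm
      have hxv : x ≠ v := fun e => hnv (e ▸ hadj).symm
      have : 6 ≤ ∑ y, f y := by
        calc (6:ℕ) = f u + f v + f x := by rw [hfu, hfv, hx2]
        _ = ∑ y ∈ ({u,v,x} : Finset V), f y := (sum_three huv hxu.symm hxv.symm).symm
        _ ≤ ∑ y, f y := Finset.sum_le_sum_of_subset (Finset.subset_univ _)
      omega
    · have : 5 ≤ ∑ y, f y := by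
        calc 5 ≤ f u + f v + f w := by omega
        _ = ∑ y ∈ ({u,v,w} : Finset V), f y := (sum_three huv hwu.symm hwv.symm).symm
        _ ≤ ∑ y, f y := Finset.sum_le_sum_of_subset (Finset.subset_univ _)
      omega

/-- non-neighbors of `v` (other than `v`) -/
def Hnb (G : SimpleGraph V) [DecidableRel G.Adj] (v : V) : Finset V :=
  univ.filter (fun w => w ≠ v ∧ ¬ G.Adj v w)

lemma mem_Hnb {G : SimpleGraph V} [DecidableRel G.Adj] {v w : V} :
    w ∈ Hnb G v ↔ w ≠ v ∧ ¬ G.Adj v w := by simp [Hnb]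

lemma degree_add_card_Hnb (G : SimpleGraph V) [DecidableRel G.Adj] (v : V) :
    G.degree v + (Hnb G v).card = Fintype.card V - 1 := by
  have hd : G.neighborFinset v ∪ Hnb G v = univ.erase v := by
    ext w
    simp only [mem_union, mem_neighborFinset, mem_Hnb, mem_erase, mem_univ, and_true]
    constructor
    · rintro (h | ⟨h1, h2⟩)
      · exact G.ne_of_adj h.symm
      · exact h1
    · intro hw
      by_cases h : G.Adj v w
      · exact Or.inl h
      · exact Or.inr ⟨hw, h⟩
  have hdis : Disjoint (G.neighborFinset v) (Hnb G v) := by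
    rw [Finset.disjoint_left]
    intro w hw hw'
    exact (mem_Hnb.mp hw').2 ((G.mem_neighborFinset v w).mp hw)
  have := Finset.card_union_of_disjoint hdis
  rw [hd] at this
  rw [← card_neighborFinset_eq_degree, ← this, Finset.card_erase_of_mem (mem_univ v),
    Finset.card_univ]


section Reg
variable (G : SimpleGraph V) [DecidableRel G.Adj] {n : ℕ}
  (hn : Fintype.card V = n) (h5 : 5 ≤ n) (hreg : G.IsRegularOfDegree (n - 3))

include hn h5 hreg

lemma card_Hnb (v : V) : (Hnb G v).card = 2 := by
  have h := degree_add_card_Hnb G v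
  rw [hreg v, hn] at h
  omega

lemma Hnb_pair (v : V) : ∃ a b : V, a ≠ b ∧ Hnb G v = {a, b} :=
  Finset.card_eq_two.mp (card_Hnb G hn h5 hreg v)

lemma four_le_rdn : 4 ≤ romanDominationNumber G := by
  refine rdn_ge (fun f hf => ?_)
  by_contra hlt
  push_neg at hlt
  have hs3 : ∑ x, f x ≤ 3 := by omega
  by_cases h2 : ∃ v, f v = 2
  · obtain ⟨v, hv2⟩ := h2
    obtain ⟨a, b, hab, hHnb⟩ := Hnb_pair G hn h5 hreg v
    have hmem : ∀ x, x ∈ Hnb G v → 1 ≤ f x := by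
      intro x hx
      rcases Nat.eq_zero_or_pos (f x) with h0 | h1
      · obtain ⟨u, hadj, hu2⟩ := hf.2 x h0
        rw [mem_Hnb] at hx
        have huv : v ≠ u := fun e => hx.2 (e ▸ hadj).symm
        have : 4 ≤ ∑ y, f y := by
          calc (4:ℕ) = f v + f u := by rw [hv2, hu2]
          _ = ∑ y ∈ ({v, u} : Finset V), f y := (Finset.sum_pair huv).symm
          _ ≤ ∑ y, f y := Finset.sum_le_sum_of_subset (Finset.subset_univ _)
        omega
      · exact h1
    have ha : a ∈ Hnb G v := by rw [hHnb]; simp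
    have hb : b ∈ Hnb G v := by rw [hHnb]; simp
    have hav : a ≠ v := (mem_Hnb.mp ha).1
    have hbv : b ≠ v := (mem_Hnb.mp hb).1
    have : 4 ≤ ∑ y, f y := by
      calc (4:ℕ) ≤ f v + f a + f b := by
            have := hmem a ha; have := hmem b hb; omega
      _ = ∑ y ∈ ({v, a, b} : Finset V), f y := (sum_three hav.symm hbv.symm hab).symm
      _ ≤ ∑ y, f y := Finset.sum_le_sum_of_subset (Finset.subset_univ _)
    omega
  · push_neg at h2
    have h1 : ∀ x, 1 ≤ f x := by
      intro x
      rcases Nat.eq_zero_or_pos (f x) with h0 | h1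
      · obtain ⟨u, _, hu2⟩ := hf.2 x h0
        exact absurd hu2 (h2 u)
      · exact h1
    have : (Fintype.card V : ℕ) ≤ ∑ x, f x := by
      calc Fintype.card V = ∑ _x : V, 1 := by simp
      _ ≤ ∑ x, f x := Finset.sum_le_sum (fun i _ => h1 i)
    omega

lemma rdn_le_four : romanDominationNumber G ≤ 4 := by
  have : Nonempty V := by
    have : 0 < Fintype.card V := by omega
    exact Fintype.card_pos_iff.mp this
  obtain ⟨v⟩ := this
  obtain ⟨a, b, hab, hHnb⟩ := Hnb_pair G hn h5 hreg v
  have ha : a ∈ Hnb G v := by rw [hHnb]; simp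
  have hb : b ∈ Hnb G v := by rw [hHnb]; simp
  refine rdn_le_four_two_one_one G v a b hab (mem_Hnb.mp ha).1 (mem_Hnb.mp hb).1 ?_
  intro x hxv hxa hxb
  by_contra hadj
  have : x ∈ Hnb G v := mem_Hnb.mpr ⟨hxv, hadj⟩
  rw [hHnb] at this
  simp only [Finset.mem_insert, Finset.mem_singleton] at this
  tauto

lemma rdn_eq_four : romanDominationNumber G = 4 :=
  le_antisymm (rdn_le_four G hn h5 hreg) (four_le_rdn G hn h5 hreg)

end Reg

section K3
variable (G : SimpleGraph V) [DecidableRel G.Adj] {n : ℕ}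
  (hn : Fintype.card V = n) (h5 : 5 ≤ n) (hreg : G.IsRegularOfDegree (n - 3))

include hn h5 hreg in
lemma exists_adj_nonnbrs
    (hK : ¬ ∃ t : ℕ, Nonempty (G ≃g completeMultipartiteGraph (fun _ : Fin t => Fin 3))) :
    ∃ (v a b : V), a ≠ b ∧ Hnb G v = {a, b} ∧ G.Adj a b := by
  by_contra hcon
  push_neg at hcon
  apply hK
  have htrans : ∀ {x y z : V}, ¬G.Adj x y → ¬G.Adj y z → ¬G.Adj x z := by
    intro x y z hxy hyz
    by_cases hxz : x = z
    · subst hxz; exact fun h => G.loopless.irrefl x h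
    by_cases hxy' : x = y
    · subst hxy'; exact hyz
    by_cases hyz' : y = z
    · subst hyz'; exact hxy
    obtain ⟨a, b, hab, hH⟩ := Hnb_pair G hn h5 hreg y
    have hnab : ¬ G.Adj a b := hcon y a b hab hH
    have hx : x ∈ Hnb G y := mem_Hnb.mpr ⟨hxy', fun h => hxy h.symm⟩
    have hz : z ∈ Hnb G y := mem_Hnb.mpr ⟨fun h => hyz' h.symm, hyz⟩
    rw [hH] at hx hz
    simp only [Finset.mem_insert, Finset.mem_singleton] at hx hz
    rcases hx with rfl | rfl <;> rcases hz with rfl | rfl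
    · exact absurd rfl hxz
    · exact hnab
    · exact fun h => hnab h.symm
    · exact absurd rfl hxz
  let s : Setoid V := ⟨fun x y => ¬ G.Adj x y,
    ⟨fun x => G.loopless.irrefl x, fun h h' => h h'.symm, fun h1 h2 => htrans h1 h2⟩⟩
  haveI : DecidableRel s.r := fun x y => instDecidableNot
  haveI : DecidableEq (Quotient s) := fun q1 q2 =>
    Quotient.recOnSubsingleton₂ q1 q2 (fun x y => decidable_of_iff (s.r x y) (Quotient.eq.symm))
  have card3 : ∀ q : Quotient s, Fintype.card {x // Quotient.mk s x = q} = 3 := by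
    intro q
    obtain ⟨v, rfl⟩ := Quotient.exists_rep q
    rw [Fintype.card_subtype]
    have hset : univ.filter (fun x => Quotient.mk s x = Quotient.mk s v) = insert v (Hnb G v) := by
      ext x
      simp only [Finset.mem_filter, Finset.mem_univ, true_and, Finset.mem_insert, mem_Hnb,
        Quotient.eq]
      constructor
      · intro hr
        by_cases hxv : x = v
        · exact Or.inl hxv
        · exact Or.inr ⟨hxv, fun h => hr h.symm⟩
      · rintro (rfl | ⟨h1, h2⟩)
        · exact fun h => G.loopless.irrefl x h
        · exact fun h => h2 h.symm
    rw [hset, Finset.card_insert_of_notMem (by simp [mem_Hnb]), card_Hnb G hn h5 hreg]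
  set t := Fintype.card (Quotient s) with ht
  refine ⟨t, ⟨?_⟩⟩
  let eQ : Quotient s ≃ Fin t := Fintype.equivFin _
  let eFib : ∀ q : Quotient s, {x // Quotient.mk s x = q} ≃ Fin 3 :=
    fun q => Fintype.equivFinOfCardEq (card3 q)
  let e : V ≃ Σ _i : Fin t, Fin 3 :=
    ((Equiv.sigmaFiberEquiv (Quotient.mk s)).symm).trans (Equiv.sigmaCongr eQ eFib)
  have hfst : ∀ x : V, (e x).1 = eQ (Quotient.mk s x) := fun x => rfl
  refine ⟨e, ?_⟩
  intro x y
  simp only [comap_adj, top_adj, hfst]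
  constructor
  · intro h
    have hq : Quotient.mk s x ≠ Quotient.mk s y := fun hc => h (by rw [hc])
    have : ¬ (s.r x y) := fun hr => hq (Quotient.sound hr)
    exact not_not.mp this
  · intro hadj hc
    have : Quotient.mk s x = Quotient.mk s y := eQ.injective hc
    exact Quotient.eq.mp this hadj

end K3

section Upper
variable (G : SimpleGraph V) [DecidableRel G.Adj] {n : ℕ}
  (hn : Fintype.card V = n) (h5 : 5 ≤ n) (hreg : G.IsRegularOfDegree (n - 3))

include hn h5 hreg in
lemma bondage_upper
    (hK : ¬ ∃ t : ℕ, Nonempty (G ≃g completeMultipartiteGraph (fun _ : Fin t => Fin 3))) :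
    ∃ B : Finset (Sym2 V), ↑B ⊆ G.edgeSet ∧ B.card = n - 2 ∧
      romanDominationNumber G < romanDominationNumber (G.deleteEdges ↑B) := by
  obtain ⟨w, a, b, hab, hH, hadj⟩ := exists_adj_nonnbrs G hn h5 hreg hK
  have haw : a ≠ w := (mem_Hnb.mp (by rw [hH]; simp : a ∈ Hnb G w)).1
  have hbw : b ≠ w := (mem_Hnb.mp (by rw [hH]; simp : b ∈ Hnb G w)).1
  have hnadj_wa : ¬ G.Adj w a := (mem_Hnb.mp (by rw [hH]; simp : a ∈ Hnb G w)).2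
  have hnadj_wb : ¬ G.Adj w b := (mem_Hnb.mp (by rw [hH]; simp : b ∈ Hnb G w)).2
  set B : Finset (Sym2 V) := insert s(a, b) (G.incidenceFinset w) with hB
  have hBsub : ↑B ⊆ G.edgeSet := by
    intro e he
    rw [hB] at he
    simp only [Finset.coe_insert, Set.mem_insert_iff, Finset.mem_coe, mem_incidenceFinset] at he
    rcases he with rfl | he
    · exact hadj
    · exact he.1
  have hsab : s(a, b) ∉ G.incidenceFinset w := by
    intro hc
    rw [mem_incidenceFinset] at hc
    have := hc
    rcases Sym2.mem_iff.mp this.2 with h | h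
    · exact haw h.symm
    · exact hbw h.symm
  have hBcard : B.card = n - 2 := by
    rw [hB, Finset.card_insert_of_notMem hsab, G.card_incidenceFinset_eq_degree, hreg w]
    omega
  set G' : SimpleGraph V := G.deleteEdges ↑B with hG'
  haveI hdec : DecidableRel G'.Adj := fun u v =>
    decidable_of_iff (G.Adj u v ∧ s(u, v) ∉ B) (by rw [hG', deleteEdges_adj, Finset.mem_coe])
  have hadj' : ∀ u v : V, G'.Adj u v ↔ G.Adj u v ∧ s(u, v) ∉ B := by
    intro u v; rw [hG', deleteEdges_adj, Finset.mem_coe]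
  -- w is isolated in G'
  have hwiso : ∀ x : V, ¬ G'.Adj w x := by
    intro x hx
    rw [hadj'] at hx
    refine hx.2 ?_
    rw [hB]
    refine Finset.mem_insert_of_mem ?_
    rw [mem_incidenceFinset]
    exact (G.mem_incidenceSet w x).mpr hx.1
  have hmono : ∀ u v : V, Hnb G v ⊆ Hnb G' v := by
    intro u v x hx
    rw [mem_Hnb] at hx ⊢
    exact ⟨hx.1, fun h => hx.2 ((hadj' v x).mp h).1⟩
  -- every vertex has ≥ 3 nonneighbors in G'
  have hnn : ∀ v : V, 3 ≤ (Hnb G' v).card := by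
    intro v
    by_cases hvw : v = w
    · subst hvw
      have hsub : univ.erase v ⊆ Hnb G' v := by
        intro x hx
        rw [mem_Hnb]
        exact ⟨Finset.ne_of_mem_erase hx, hwiso x⟩
      calc 3 ≤ (univ.erase v).card := by
            rw [Finset.card_erase_of_mem (Finset.mem_univ v), Finset.card_univ]; omega
      _ ≤ (Hnb G' v).card := Finset.card_le_card hsub
    · -- find a new non-neighbor c ∉ Hnb G v
      have : ∃ c, c ∉ Hnb G v ∧ c ∈ Hnb G' v := by
        by_cases hva : v = a
        · subst hva
          refine ⟨b, ?_, ?_⟩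
          · rw [mem_Hnb]; push_neg; intro _; exact hadj
          · rw [mem_Hnb]
            exact ⟨hab.symm, fun h => ((hadj' _ _).mp h).2 (by rw [hB]; exact Finset.mem_insert_self _ _)⟩
        by_cases hvb : v = b
        · subst hvb
          refine ⟨a, ?_, ?_⟩
          · rw [mem_Hnb]; push_neg; intro _; exact hadj.symm
          · rw [mem_Hnb]
            refine ⟨hab, fun h => ((hadj' _ _).mp h).2 ?_⟩
            rw [hB]
            have : s(v, a) = s(a, v) := Sym2.eq_swap
            rw [this]
            exact Finset.mem_insert_self _ _
        · -- v ∉ {w, a, b} : w is a new non-neighbor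
          have hvnH : v ∉ Hnb G w := by rw [hH]; simp [hva, hvb]
          have hadj_wv : G.Adj w v := by
            by_contra hc
            exact hvnH (mem_Hnb.mpr ⟨hvw, hc⟩)
          refine ⟨w, ?_, ?_⟩
          · rw [mem_Hnb]; push_neg; intro _; exact hadj_wv.symm
          · rw [mem_Hnb]
            exact ⟨fun h => hvw h.symm, fun h => hwiso v h.symm⟩
      obtain ⟨c, hc1, hc2⟩ := this
      have : insert c (Hnb G v) ⊆ Hnb G' v := by
        intro x hx
        rcases Finset.mem_insert.mp hx with rfl | hx
        · exact hc2
        · exact hmono v v hx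
      calc 3 = (insert c (Hnb G v)).card := by
            rw [Finset.card_insert_of_notMem hc1, card_Hnb G hn h5 hreg]
      _ ≤ (Hnb G' v).card := Finset.card_le_card this
  have hfar : ∀ v : V, ∃ x, x ≠ w ∧ x ≠ v ∧ ¬G'.Adj v x := by
    intro v
    obtain ⟨c, d, hcd, hp⟩ := Hnb_pair G hn h5 hreg v
    have hcmem : c ∈ Hnb G v := by rw [hp]; simp
    have hdmem : d ∈ Hnb G v := by rw [hp]; simp
    by_cases hcw : c = w
    · exact ⟨d, fun h => hcd (hcw.trans h.symm), (mem_Hnb.mp hdmem).1,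
        fun h => (mem_Hnb.mp (hmono v v hdmem)).2 h⟩
    · exact ⟨c, hcw, (mem_Hnb.mp hcmem).1,
        fun h => (mem_Hnb.mp (hmono v v hcmem)).2 h⟩
  have hpair : ∀ u v : V, u ≠ v → ∃ x, x ≠ u ∧ x ≠ v ∧ ¬G'.Adj u x ∧ ¬G'.Adj v x := by
    intro u v huv
    by_cases hu : u = w
    · obtain ⟨x, hxw, hxv, hxa⟩ := hfar v
      exact ⟨x, by rw [hu]; exact hxw, hxv,
        by rw [hu]; exact fun h => hwiso x h, hxa⟩
    by_cases hv : v = w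
    · obtain ⟨x, hxw, hxu, hxa⟩ := hfar u
      exact ⟨x, hxu, by rw [hv]; exact hxw, hxa,
        by rw [hv]; exact fun h => hwiso x h⟩
    · exact ⟨w, fun h => hu h.symm, fun h => hv h.symm,
        fun h => hwiso u h.symm, fun h => hwiso v h.symm⟩
  have h5' : 5 ≤ romanDominationNumber G' := by
    refine ge_five G' (by omega) ?_ hpair
    intro v
    have := hnn v
    simpa [Hnb] using this
  refine ⟨B, hBsub, hBcard, ?_⟩
  rw [rdn_eq_four G hn h5 hreg, ← hG']
  omega

end Upper

section Lower

/-- the graph with edges of `B` deleted -/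
def Gdel (G : SimpleGraph V) (B : Finset (Sym2 V)) : SimpleGraph V := G.deleteEdges ↑B

instance GdelDec (G : SimpleGraph V) [DecidableRel G.Adj] (B : Finset (Sym2 V)) :
    DecidableRel (Gdel G B).Adj := fun u v =>
  decidable_of_iff (G.Adj u v ∧ ¬ s(u, v) ∈ B) (by rw [Gdel, deleteEdges_adj, Finset.mem_coe])

lemma Gdel_adj (G : SimpleGraph V) (B : Finset (Sym2 V)) (u v : V) :
    (Gdel G B).Adj u v ↔ G.Adj u v ∧ ¬ s(u, v) ∈ B := by
  rw [Gdel, deleteEdges_adj, Finset.mem_coe]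

/-- the `B`-neighbors of `v` -/
def Bnb (B : Finset (Sym2 V)) (v : V) : Finset V := univ.filter (fun w => s(v, w) ∈ B)

/-- the `B`-degree of `v` -/
def bdeg (B : Finset (Sym2 V)) (v : V) : ℕ := (Bnb B v).card

/-- the non-neighbors (in the deleted graph) of `v` -/
def NF (G : SimpleGraph V) [DecidableRel G.Adj] (B : Finset (Sym2 V)) (v : V) : Finset V :=
  Hnb (Gdel G B) v

variable {G : SimpleGraph V} [DecidableRel G.Adj] {B : Finset (Sym2 V)}

lemma mem_NF {v w : V} : w ∈ NF G B v ↔ w ≠ v ∧ (¬ G.Adj v w ∨ s(v, w) ∈ B) := by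
  rw [NF, mem_Hnb, Gdel_adj]
  tauto

lemma mem_Bnb {v w : V} : w ∈ Bnb B v ↔ s(v, w) ∈ B := by simp [Bnb]

lemma NF_symm {v w : V} : w ∈ NF G B v ↔ v ∈ NF G B w := by
  rw [mem_NF, mem_NF, Sym2.eq_swap]
  constructor
  · rintro ⟨h1, h2⟩
    exact ⟨h1.symm, by rwa [adj_comm] at h2⟩
  · rintro ⟨h1, h2⟩
    exact ⟨h1.symm, by rwa [adj_comm] at h2⟩

lemma not_self_NF {v : V} : v ∉ NF G B v := fun h => (mem_NF.mp h).1 rfl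

lemma Bnb_subset_NF (hBsub : ↑B ⊆ G.edgeSet) {v : V} : Bnb B v ⊆ NF G B v := by
  intro w hw
  rw [mem_Bnb] at hw
  have hadj : G.Adj v w := (G.mem_edgeSet).mp (hBsub hw)
  exact mem_NF.mpr ⟨hadj.ne', Or.inr hw⟩

lemma NF_eq_union (hBsub : ↑B ⊆ G.edgeSet) (v : V) :
    NF G B v = Hnb G v ∪ Bnb B v := by
  ext w
  rw [mem_NF, Finset.mem_union, mem_Hnb, mem_Bnb]
  constructor
  · rintro ⟨h1, h2 | h2⟩
    · exact Or.inl ⟨h1, h2⟩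
    · exact Or.inr h2
  · rintro (⟨h1, h2⟩ | h)
    · exact ⟨h1, Or.inl h2⟩
    · have hadj : G.Adj v w := (G.mem_edgeSet).mp (hBsub h)
      exact ⟨hadj.ne', Or.inr h⟩

lemma card_NF (hBsub : ↑B ⊆ G.edgeSet) {n : ℕ} (hn : Fintype.card V = n) (h5 : 5 ≤ n)
    (hreg : G.IsRegularOfDegree (n - 3)) (v : V) :
    (NF G B v).card = 2 + bdeg B v := by
  rw [NF_eq_union hBsub v, Finset.card_union_of_disjoint, card_Hnb G hn h5 hreg, bdeg]
  rw [Finset.disjoint_left]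
  intro w hw hw'
  rw [mem_Hnb] at hw
  rw [mem_Bnb] at hw'
  exact hw.2 ((G.mem_edgeSet).mp (hBsub hw'))

lemma sum_bdeg (hBsub : ↑B ⊆ G.edgeSet) : ∑ v, bdeg B v = 2 * B.card := by
  classical
  set GB : SimpleGraph V := SimpleGraph.fromEdgeSet ↑B with hGB
  haveI : DecidableRel GB.Adj := fun u v =>
    decidable_of_iff (s(u, v) ∈ B ∧ u ≠ v) (by rw [hGB, fromEdgeSet_adj, Finset.mem_coe])
  have hnbr : ∀ v, GB.neighborFinset v = Bnb B v := by
    intro v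
    ext w
    rw [SimpleGraph.mem_neighborFinset, mem_Bnb, hGB, fromEdgeSet_adj, Finset.mem_coe]
    constructor
    · exact fun h => h.1
    · intro h
      have hadj : G.Adj v w := (G.mem_edgeSet).mp (hBsub h)
      exact ⟨h, hadj.ne⟩
  have hdeg : ∀ v, GB.degree v = bdeg B v := by
    intro v
    rw [← card_neighborFinset_eq_degree, hnbr, bdeg]
  have hES : GB.edgeSet = ↑B := by
    rw [hGB, edgeSet_fromEdgeSet]
    ext e
    simp only [Set.mem_diff, Set.mem_setOf_eq, Finset.mem_coe, and_iff_left_iff_imp]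
    exact fun he => G.not_isDiag_of_mem_edgeSet (hBsub he)
  have hedge : (@edgeFinset V GB GB.fintypeEdgeSet) = B := by
    apply Finset.coe_injective
    rw [coe_edgeFinset, hES]
  calc ∑ v, bdeg B v = ∑ v, GB.degree v := by simp [hdeg]
  _ = 2 * (@edgeFinset V GB GB.fintypeEdgeSet).card := GB.sum_degrees_eq_twice_card_edges
  _ = 2 * B.card := by rw [hedge]

end Lower

section Counting
variable {G : SimpleGraph V} [DecidableRel G.Adj] {B : Finset (Sym2 V)} {n : ℕ}

lemma M1 (hP : ∀ u v : V, u ≠ v → (NF G B u ∩ NF G B v).Nonempty)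
    (hne : ∀ v : V, (NF G B v).Nonempty) :
    ∀ u x : V, ∃ w, w ∈ NF G B u ∧ x ∈ NF G B w := by
  intro u x
  by_cases hux : u = x
  · obtain ⟨w, hw⟩ := hne u
    exact ⟨w, hw, hux ▸ NF_symm.mp hw⟩
  · obtain ⟨w, hw⟩ := hP u x hux
    rw [Finset.mem_inter] at hw
    exact ⟨w, hw.1, NF_symm.mp hw.2⟩

lemma pair_inter_card (S : Finset V) {b c : V} (hbc : b ≠ c) :
    (S ∩ ({b, c} : Finset V)).card =
      (if b ∈ S then 1 else 0) + (if c ∈ S then 1 else 0) := by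
  have h : S ∩ ({b, c} : Finset V) = ({b, c} : Finset V).filter (· ∈ S) := by
    ext x
    simp only [Finset.mem_inter, Finset.mem_filter]
    tauto
  rw [h, Finset.filter_insert, Finset.filter_singleton]
  by_cases hb : b ∈ S <;> by_cases hc : c ∈ S <;>
    simp [hb, hc, Finset.card_insert_of_notMem, Finset.mem_singleton, hbc]

lemma M2 (hBsub : ↑B ⊆ G.edgeSet) (hn : Fintype.card V = n) (h5 : 5 ≤ n)
    (hreg : G.IsRegularOfDegree (n - 3))
    (hP : ∀ u v : V, u ≠ v → (NF G B u ∩ NF G B v).Nonempty)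
    {u : V} (hu : bdeg B u = 1) :
    n ≤ 3 + ∑ w ∈ NF G B u, bdeg B w := by
  have hne : ∀ v : V, (NF G B v).Nonempty := by
    intro v
    rw [← Finset.card_pos, card_NF hBsub hn h5 hreg]
    omega
  have hNFcard : (NF G B u).card = 3 := by rw [card_NF hBsub hn h5 hreg, hu]
  obtain ⟨a, b, c, hab, hac, hbc, hNF⟩ := Finset.card_eq_three.mp hNFcard
  have haNF : a ∈ NF G B u := by rw [hNF]; simp
  have hbNF : b ∈ NF G B u := by rw [hNF]; simp
  have hcNF : c ∈ NF G B u := by rw [hNF]; simp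
  have hau : a ≠ u := (mem_NF.mp haNF).1
  have hbu : b ≠ u := (mem_NF.mp hbNF).1
  have hcu : c ≠ u := (mem_NF.mp hcNF).1
  have huNFa : u ∈ NF G B a := NF_symm.mp haNF
  have huNFb : u ∈ NF G B b := NF_symm.mp hbNF
  have huNFc : u ∈ NF G B c := NF_symm.mp hcNF
  set X : Finset V := insert u {a, b, c} with hX
  have habc_card : ({a, b, c} : Finset V).card = 3 := by
    rw [Finset.card_insert_of_notMem (by simp [hab, hac]),
      Finset.card_insert_of_notMem (by simp [hbc]), Finset.card_singleton]
  have hXcard : X.card = 4 := by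
    rw [hX, Finset.card_insert_of_notMem (by simp [hau.symm, hbu.symm, hcu.symm]), habc_card]
  -- coverage of vertices outside X
  have hcover : ∀ x, x ∉ X → x ∈ (NF G B a \ X) ∪ (NF G B b \ X) ∪ (NF G B c \ X) := by
    intro x hx
    obtain ⟨w, hwNF, hxw⟩ := M1 hP hne u x
    rw [hNF] at hwNF
    simp only [Finset.mem_insert, Finset.mem_singleton] at hwNF
    simp only [Finset.mem_union, Finset.mem_sdiff]
    rcases hwNF with rfl | rfl | rfl
    · exact Or.inl (Or.inl ⟨hxw, hx⟩)
    · exact Or.inl (Or.inr ⟨hxw, hx⟩)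
    · exact Or.inr ⟨hxw, hx⟩
  have hsub : univ \ X ⊆ (NF G B a \ X) ∪ (NF G B b \ X) ∪ (NF G B c \ X) := by
    intro x hx
    exact hcover x (Finset.mem_sdiff.mp hx).2
  have h1 : (univ \ X).card + X.card = n := by
    rw [Finset.card_sdiff_add_card_eq_card (Finset.subset_univ X), Finset.card_univ, hn]
  have h2 : (univ \ X).card ≤ (NF G B a \ X).card + (NF G B b \ X).card
      + (NF G B c \ X).card := by
    calc (univ \ X).card ≤ ((NF G B a \ X) ∪ (NF G B b \ X) ∪ (NF G B c \ X)).card :=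
          Finset.card_le_card hsub
    _ ≤ ((NF G B a \ X) ∪ (NF G B b \ X)).card + (NF G B c \ X).card := Finset.card_union_le _ _
    _ ≤ (NF G B a \ X).card + (NF G B b \ X).card + (NF G B c \ X).card := by
          have := Finset.card_union_le (NF G B a \ X) (NF G B b \ X)
          omega
  -- split each NF w by X
  have hsplit : ∀ w : V, (NF G B w ∩ X).card + (NF G B w \ X).card = (NF G B w).card :=
    fun w => Finset.card_inter_add_card_sdiff _ _
  have hDa := card_NF hBsub hn h5 hreg a
  have hDb := card_NF hBsub hn h5 hreg b
  have hDc := card_NF hBsub hn h5 hreg c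
  -- lower bounds on the intersections
  have hIa : 1 + (NF G B a ∩ ({b, c} : Finset V)).card ≤ (NF G B a ∩ X).card := by
    have hss : insert u (NF G B a ∩ ({b, c} : Finset V)) ⊆ NF G B a ∩ X := by
      intro x hx
      rcases Finset.mem_insert.mp hx with rfl | hx
      · exact Finset.mem_inter.mpr ⟨huNFa, Finset.mem_insert_self _ _⟩
      · have := Finset.mem_inter.mp hx
        refine Finset.mem_inter.mpr ⟨this.1, ?_⟩
        have h' := this.2
        simp only [Finset.mem_insert, Finset.mem_singleton] at h'
        rw [hX]
        rcases h' with rfl | rfl <;> simp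
    calc 1 + (NF G B a ∩ ({b, c} : Finset V)).card
        = (insert u (NF G B a ∩ ({b, c} : Finset V))).card := by
          rw [Finset.card_insert_of_notMem (by
            simp only [Finset.mem_inter, Finset.mem_insert, Finset.mem_singleton, not_and, not_or]
            exact fun _ => ⟨fun h => hbu h.symm, fun h => hcu h.symm⟩)]
          omega
    _ ≤ (NF G B a ∩ X).card := Finset.card_le_card hss
  have hIb : 1 + (NF G B b ∩ ({a, c} : Finset V)).card ≤ (NF G B b ∩ X).card := by
    have hss : insert u (NF G B b ∩ ({a, c} : Finset V)) ⊆ NF G B b ∩ X := by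
      intro x hx
      rcases Finset.mem_insert.mp hx with rfl | hx
      · exact Finset.mem_inter.mpr ⟨huNFb, Finset.mem_insert_self _ _⟩
      · have := Finset.mem_inter.mp hx
        refine Finset.mem_inter.mpr ⟨this.1, ?_⟩
        have h' := this.2
        simp only [Finset.mem_insert, Finset.mem_singleton] at h'
        rw [hX]
        rcases h' with rfl | rfl <;> simp
    calc 1 + (NF G B b ∩ ({a, c} : Finset V)).card
        = (insert u (NF G B b ∩ ({a, c} : Finset V))).card := by
          rw [Finset.card_insert_of_notMem (by
            simp only [Finset.mem_inter, Finset.mem_insert, Finset.mem_singleton, not_and, not_or]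
            exact fun _ => ⟨fun h => hau h.symm, fun h => hcu h.symm⟩)]
          omega
    _ ≤ (NF G B b ∩ X).card := Finset.card_le_card hss
  have hIc : 1 + (NF G B c ∩ ({a, b} : Finset V)).card ≤ (NF G B c ∩ X).card := by
    have hss : insert u (NF G B c ∩ ({a, b} : Finset V)) ⊆ NF G B c ∩ X := by
      intro x hx
      rcases Finset.mem_insert.mp hx with rfl | hx
      · exact Finset.mem_inter.mpr ⟨huNFc, Finset.mem_insert_self _ _⟩
      · have := Finset.mem_inter.mp hx
        refine Finset.mem_inter.mpr ⟨this.1, ?_⟩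
        have h' := this.2
        simp only [Finset.mem_insert, Finset.mem_singleton] at h'
        rw [hX]
        rcases h' with rfl | rfl <;> simp
    calc 1 + (NF G B c ∩ ({a, b} : Finset V)).card
        = (insert u (NF G B c ∩ ({a, b} : Finset V))).card := by
          rw [Finset.card_insert_of_notMem (by
            simp only [Finset.mem_inter, Finset.mem_insert, Finset.mem_singleton, not_and, not_or]
            exact fun _ => ⟨fun h => hau h.symm, fun h => hbu h.symm⟩)]
          omega
    _ ≤ (NF G B c ∩ X).card := Finset.card_le_card hss
  -- mutual adjacency: at least two internal edges
  have hcov3 : ∀ x, x ∈ NF G B u → (∃ w, w ∈ NF G B u ∧ w ≠ x ∧ x ∈ NF G B w) := by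
    intro x hx
    obtain ⟨w, hwNF, hxw⟩ := M1 hP hne u x
    have hwx : w ≠ x := by
      rintro rfl
      exact not_self_NF hxw
    exact ⟨w, hwNF, hwx, hxw⟩
  have hcova : a ∈ NF G B b ∨ a ∈ NF G B c := by
    obtain ⟨w, hwNF, hwa, haw⟩ := hcov3 a haNF
    rw [hNF] at hwNF
    simp only [Finset.mem_insert, Finset.mem_singleton] at hwNF
    rcases hwNF with rfl | rfl | rfl
    · exact absurd rfl hwa
    · exact Or.inl haw
    · exact Or.inr haw
  have hcovb : b ∈ NF G B a ∨ b ∈ NF G B c := by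
    obtain ⟨w, hwNF, hwb, hbw⟩ := hcov3 b hbNF
    rw [hNF] at hwNF
    simp only [Finset.mem_insert, Finset.mem_singleton] at hwNF
    rcases hwNF with rfl | rfl | rfl
    · exact Or.inl hbw
    · exact absurd rfl hwb
    · exact Or.inr hbw
  have hcovc : c ∈ NF G B a ∨ c ∈ NF G B b := by
    obtain ⟨w, hwNF, hwc, hcw⟩ := hcov3 c hcNF
    rw [hNF] at hwNF
    simp only [Finset.mem_insert, Finset.mem_singleton] at hwNF
    rcases hwNF with rfl | rfl | rfl
    · exact Or.inl hcw
    · exact Or.inr hcw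
    · exact absurd rfl hwc
  have hesum : 4 ≤ (NF G B a ∩ ({b, c} : Finset V)).card
      + (NF G B b ∩ ({a, c} : Finset V)).card + (NF G B c ∩ ({a, b} : Finset V)).card := by
    have one_le : ∀ (S : Finset V) (x y z : V), x ∈ S → (x = y ∨ x = z) →
        1 ≤ (S ∩ ({y, z} : Finset V)).card := by
      intro S x y z hx hxyz
      refine Finset.card_pos.mpr ⟨x, Finset.mem_inter.mpr ⟨hx, ?_⟩⟩
      rcases hxyz with rfl | rfl <;> simp
    have two_le : ∀ (S : Finset V) (y z : V), y ∈ S → z ∈ S → y ≠ z →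
        2 ≤ (S ∩ ({y, z} : Finset V)).card := by
      intro S y z hy hz hyz
      have hss : ({y, z} : Finset V) ⊆ S ∩ ({y, z} : Finset V) := by
        intro x hx
        simp only [Finset.mem_insert, Finset.mem_singleton] at hx
        rcases hx with rfl | rfl <;> exact Finset.mem_inter.mpr ⟨by assumption, by simp⟩
      calc 2 = ({y, z} : Finset V).card := (Finset.card_pair hyz).symm
      _ ≤ _ := Finset.card_le_card hss
    rcases hcova with h | h <;> rcases hcovb with h' | h' <;> rcases hcovc with h'' | h''
    · -- h : a∈NFb, h' : b∈NFa, h'' : c∈NFa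
      have e1 := two_le (NF G B a) b c h' h'' hbc
      have e2 := one_le (NF G B b) a a c h (Or.inl rfl)
      have e3 := one_le (NF G B c) a a b (NF_symm.mp h'') (Or.inl rfl)
      omega
    · -- h : a∈NFb, h' : b∈NFa, h'' : c∈NFb
      have e1 := one_le (NF G B a) b b c h' (Or.inl rfl)
      have e2 := two_le (NF G B b) a c h h'' hac
      have e3 := one_le (NF G B c) b a b (NF_symm.mp h'') (Or.inr rfl)
      omega
    · -- h : a∈NFb, h' : b∈NFc, h'' : c∈NFa
      have e1 := one_le (NF G B a) c b c h'' (Or.inr rfl)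
      have e2 := one_le (NF G B b) a a c h (Or.inl rfl)
      have e3 := two_le (NF G B c) a b (NF_symm.mp h'') h' hab
      omega
    · -- h : a∈NFb, h' : b∈NFc, h'' : c∈NFb
      have e1 := one_le (NF G B a) b b c (NF_symm.mp h) (Or.inl rfl)
      have e2 := two_le (NF G B b) a c h h'' hac
      have e3 := one_le (NF G B c) b a b h' (Or.inr rfl)
      omega
    · -- h : a∈NFc, h' : b∈NFa, h'' : c∈NFa
      have e1 := two_le (NF G B a) b c h' h'' hbc
      have e2 := one_le (NF G B b) a a c (NF_symm.mp h') (Or.inl rfl)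
      have e3 := one_le (NF G B c) a a b h (Or.inl rfl)
      omega
    · -- h : a∈NFc, h' : b∈NFa, h'' : c∈NFb
      have e1 := two_le (NF G B a) b c h' (NF_symm.mp h) hbc
      have e2 := one_le (NF G B b) c a c h'' (Or.inr rfl)
      have e3 := one_le (NF G B c) a a b h (Or.inl rfl)
      omega
    · -- h : a∈NFc, h' : b∈NFc, h'' : c∈NFa
      have e1 := one_le (NF G B a) c b c h'' (Or.inr rfl)
      have e2 := one_le (NF G B b) c a c (NF_symm.mp h') (Or.inr rfl)
      have e3 := two_le (NF G B c) a b h h' hab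
      omega
    · -- h : a∈NFc, h' : b∈NFc, h'' : c∈NFb
      have e1 := one_le (NF G B a) c b c (NF_symm.mp h) (Or.inr rfl)
      have e2 := one_le (NF G B b) c a c h'' (Or.inr rfl)
      have e3 := two_le (NF G B c) a b h h' hab
      omega
  -- final sum over NF u
  have hsum3 : ∑ w ∈ NF G B u, bdeg B w = bdeg B a + bdeg B b + bdeg B c := by
    rw [hNF, sum_three hab hac hbc]
  have hsa := hsplit a
  have hsb := hsplit b
  have hsc := hsplit c
  omega

end Counting

lemma Hnb_symm {G : SimpleGraph V} [DecidableRel G.Adj] {v w : V} :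
    w ∈ Hnb G v ↔ v ∈ Hnb G w := by
  rw [mem_Hnb, mem_Hnb, adj_comm]
  exact ⟨fun h => ⟨h.1.symm, h.2⟩, fun h => ⟨h.1.symm, h.2⟩⟩

section Heavy
variable {G : SimpleGraph V} [DecidableRel G.Adj] {B : Finset (Sym2 V)} {n : ℕ}

lemma M3 (hBsub : ↑B ⊆ G.edgeSet) (hn : Fintype.card V = n) (h5 : 5 ≤ n)
    (hreg : G.IsRegularOfDegree (n - 3))
    (hP : ∀ u v : V, u ≠ v → (NF G B u ∩ NF G B v).Nonempty)
    (hall : ∀ v : V, 1 ≤ bdeg B v) (hm : B.card ≤ n - 3) :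
    ∀ z : V, bdeg B z ≤ 2 := by
  have h2m : ∑ v, bdeg B v = 2 * B.card := sum_bdeg hBsub
  intro z
  by_contra h3
  push_neg at h3
  -- step 1 : every vertex of b-degree one has z as a non-neighbor
  have hstep1 : ∀ u : V, bdeg B u = 1 → z ∈ NF G B u := by
    intro u hu1
    by_contra hzNF
    have hzu : z ≠ u := fun e => by rw [e, hu1] at h3; omega
    set T : Finset V := insert u (insert z (NF G B u)) with hT
    have hTcard : T.card = 5 := by
      rw [hT, Finset.card_insert_of_notMem (by
          simp only [Finset.mem_insert]
          push_neg
          exact ⟨hzu.symm, not_self_NF⟩),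
        Finset.card_insert_of_notMem hzNF, card_NF hBsub hn h5 hreg, hu1]
    have hsplit : ∑ v ∈ univ \ T, bdeg B v + ∑ v ∈ T, bdeg B v = ∑ v, bdeg B v :=
      Finset.sum_sdiff (Finset.subset_univ T)
    have hsT : ∑ v ∈ T, bdeg B v
        = bdeg B u + (bdeg B z + ∑ v ∈ NF G B u, bdeg B v) := by
      rw [hT, Finset.sum_insert (by
          simp only [Finset.mem_insert]
          push_neg
          exact ⟨hzu.symm, not_self_NF⟩),
        Finset.sum_insert hzNF]
    have hNFge : n ≤ 3 + ∑ v ∈ NF G B u, bdeg B v := M2 hBsub hn h5 hreg hP hu1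
    have hrest : (univ \ T).card ≤ ∑ v ∈ univ \ T, bdeg B v := by
      calc (univ \ T).card = ∑ _v ∈ univ \ T, 1 := by simp
      _ ≤ _ := Finset.sum_le_sum (fun i _ => hall i)
    have hrestcard : (univ \ T).card + T.card = n := by
      rw [Finset.card_sdiff_add_card_eq_card (Finset.subset_univ T), Finset.card_univ, hn]
    have hu1' := hu1
    omega
  -- step 2 : every vertex outside the closed non-neighborhood of z has b-degree ≥ 2
  set T' : Finset V := insert z (NF G B z) with hT'
  have hT'card : T'.card = 3 + bdeg B z := by
    rw [hT', Finset.card_insert_of_notMem not_self_NF, card_NF hBsub hn h5 hreg]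
    omega
  have hR : ∀ w ∈ univ \ T', 2 ≤ bdeg B w := by
    intro w hw
    rw [Finset.mem_sdiff, hT', Finset.mem_insert] at hw
    push_neg at hw
    have hne1 : bdeg B w ≠ 1 := by
      intro h1
      exact hw.2.2 (NF_symm.mp (hstep1 w h1))
    have := hall w
    omega
  have hsplit' : ∑ v ∈ univ \ T', bdeg B v + ∑ v ∈ T', bdeg B v = ∑ v, bdeg B v :=
    Finset.sum_sdiff (Finset.subset_univ T')
  have hsT' : ∑ v ∈ T', bdeg B v = bdeg B z + ∑ v ∈ NF G B z, bdeg B v := by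
    rw [hT', Finset.sum_insert not_self_NF]
  have hNFz : (NF G B z).card ≤ ∑ v ∈ NF G B z, bdeg B v := by
    calc (NF G B z).card = ∑ _v ∈ NF G B z, 1 := by simp
    _ ≤ _ := Finset.sum_le_sum (fun i _ => hall i)
  have hNFzcard := card_NF hBsub hn h5 hreg (B := B) z
  have hrest' : 2 * (univ \ T').card ≤ ∑ v ∈ univ \ T', bdeg B v := by
    calc 2 * (univ \ T').card = ∑ _v ∈ univ \ T', 2 := by
          rw [Finset.sum_const, smul_eq_mul, mul_comm]
    _ ≤ _ := Finset.sum_le_sum (fun i hi => hR i hi)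
  have hrestcard' : (univ \ T').card + T'.card = n := by
    rw [Finset.card_sdiff_add_card_eq_card (Finset.subset_univ T'), Finset.card_univ, hn]
  omega

end Heavy

section Six
variable {G : SimpleGraph V} [DecidableRel G.Adj] {B : Finset (Sym2 V)} {n : ℕ}

lemma swap_mem {x y : V} (h : s(x, y) ∈ B) : s(y, x) ∈ B := by rwa [Sym2.eq_swap]

lemma edge_ne (hBsub : ↑B ⊆ G.edgeSet) {x y : V} (h : s(x, y) ∈ B) : x ≠ y :=
  ((G.mem_edgeSet).mp (hBsub h)).ne

lemma partner_exists (hall1 : ∀ v : V, bdeg B v = 1) (x : V) :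
    ∃ y, Bnb B x = {y} := Finset.card_eq_one.mp (hall1 x)

lemma partner_uniq (hall1 : ∀ v : V, bdeg B v = 1) {x w w' : V}
    (h : s(x, w) ∈ B) (h' : s(x, w') ∈ B) : w = w' := by
  obtain ⟨y, hy⟩ := partner_exists hall1 x
  have h1 : w ∈ Bnb B x := mem_Bnb.mpr h
  have h2 : w' ∈ Bnb B x := mem_Bnb.mpr h'
  rw [hy, Finset.mem_singleton] at h1 h2
  rw [h1, h2]

lemma commonH (hBsub : ↑B ⊆ G.edgeSet) (hn : Fintype.card V = n) (h5 : 5 ≤ n)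
    (hreg : G.IsRegularOfDegree (n - 3)) (hall1 : ∀ v : V, bdeg B v = 1)
    (hP : ∀ u v : V, u ≠ v → (NF G B u ∩ NF G B v).Nonempty)
    {x y : V} (hxy : s(x, y) ∈ B) : ∃ w, Hnb G w = {x, y} := by
  obtain ⟨w, hw⟩ := hP x y (edge_ne hBsub hxy)
  rw [Finset.mem_inter] at hw
  have hwx : w ∈ Hnb G x := by
    have := hw.1
    rw [NF_eq_union hBsub, Finset.mem_union] at this
    rcases this with h | h
    · exact h
    · exfalso
      rw [mem_Bnb] at h
      have : w = y := partner_uniq hall1 h hxy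
      exact (mem_NF.mp hw.2).1 this
  have hwy : w ∈ Hnb G y := by
    have := hw.2
    rw [NF_eq_union hBsub, Finset.mem_union] at this
    rcases this with h | h
    · exact h
    · exfalso
      rw [mem_Bnb] at h
      have : w = x := partner_uniq hall1 h (swap_mem hxy)
      exact (mem_NF.mp hw.1).1 this
  refine ⟨w, ?_⟩
  have hsub : ({x, y} : Finset V) ⊆ Hnb G w := by
    intro t ht
    simp only [Finset.mem_insert, Finset.mem_singleton] at ht
    rcases ht with rfl | rfl
    · exact Hnb_symm.mp hwx
    · exact Hnb_symm.mp hwy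
  have hcap : (Hnb G w).card ≤ ({x, y} : Finset V).card := by
    rw [card_Hnb G hn h5 hreg, Finset.card_pair (edge_ne hBsub hxy)]
  exact (Finset.eq_of_subset_of_card_le hsub hcap).symm

lemma L6core (hBsub : ↑B ⊆ G.edgeSet) (hn : Fintype.card V = n) (h5 : 5 ≤ n)
    (hreg : G.IsRegularOfDegree (n - 3)) (h6 : n = 6) (hall1 : ∀ v : V, bdeg B v = 1)
    (hP : ∀ u v : V, u ≠ v → (NF G B u ∩ NF G B v).Nonempty)
    {u v w1 v1 : V} (huv : s(u, v) ∈ B) (hw1v1 : s(w1, v1) ∈ B)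
    (hw1 : Hnb G w1 = {u, v}) (hu : Hnb G u = {w1, v1}) : False := by
  have huvne : u ≠ v := edge_ne hBsub huv
  have hw1v1ne : w1 ≠ v1 := edge_ne hBsub hw1v1
  have hw1Hu : w1 ∈ Hnb G u := by rw [hu]; simp
  have hv1Hu : v1 ∈ Hnb G u := by rw [hu]; simp
  have huHw1 : u ∈ Hnb G w1 := by rw [hw1]; simp
  have hvHw1 : v ∈ Hnb G w1 := by rw [hw1]; simp
  have hw1u : w1 ≠ u := (mem_Hnb.mp hw1Hu).1
  have hv1u : v1 ≠ u := (mem_Hnb.mp hv1Hu).1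
  have hw1v : w1 ≠ v := fun e => (mem_Hnb.mp hvHw1).1 e.symm
  have hv1v : v1 ≠ v := by
    intro e
    subst e
    exact hw1u (partner_uniq hall1 (swap_mem hw1v1) (swap_mem huv))
  -- pick x outside {u, v, w1, v1}
  set Y : Finset V := {u, v, w1, v1} with hY
  have hYcard : Y.card ≤ 4 := by
    rw [hY]
    apply le_trans (Finset.card_insert_le _ _)
    have := Finset.card_insert_le v ({w1, v1} : Finset V)
    have := Finset.card_insert_le w1 ({v1} : Finset V)
    simp only [Finset.card_singleton] at *
    omega
  have hex : (univ \ Y).Nonempty := by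
    rw [← Finset.card_pos, Finset.card_sdiff_of_subset (Finset.subset_univ Y), Finset.card_univ, hn]
    omega
  obtain ⟨x, hx⟩ := hex
  rw [Finset.mem_sdiff, hY] at hx
  have hxnot := hx.2
  simp only [Finset.mem_insert, Finset.mem_singleton] at hxnot
  push_neg at hxnot
  obtain ⟨hxu, hxv, hxw1, hxv1⟩ := hxnot
  -- its partner y
  obtain ⟨y, hy⟩ := partner_exists hall1 x
  have hxyB : s(x, y) ∈ B := mem_Bnb.mp (by rw [hy]; simp)
  have hxy : x ≠ y := edge_ne hBsub hxyB
  have hyu : y ≠ u := by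
    intro e
    subst e
    exact hxv (partner_uniq hall1 (swap_mem hxyB) huv)
  have hyv : y ≠ v := by
    intro e
    subst e
    exact hxu (partner_uniq hall1 (swap_mem hxyB) (swap_mem huv))
  have hyw1 : y ≠ w1 := by
    intro e
    subst e
    exact hxv1 (partner_uniq hall1 (swap_mem hxyB) hw1v1)
  have hyv1 : y ≠ v1 := by
    intro e
    subst e
    exact hxw1 (partner_uniq hall1 (swap_mem hxyB) (swap_mem hw1v1))
  -- common H-neighbor of x and y
  obtain ⟨w3, hw3⟩ := commonH hBsub hn h5 hreg hall1 hP hxyB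
  have hxHw3 : x ∈ Hnb G w3 := by rw [hw3]; simp
  have hyHw3 : y ∈ Hnb G w3 := by rw [hw3]; simp
  have hw3x : w3 ≠ x := fun e => (mem_Hnb.mp hxHw3).1 e.symm
  have hw3y : w3 ≠ y := fun e => (mem_Hnb.mp hyHw3).1 e.symm
  have hw3u : w3 ≠ u := by
    intro e
    rw [e, hu] at hw3
    have : w1 ∈ ({x, y} : Finset V) := by rw [← hw3]; simp
    simp only [Finset.mem_insert, Finset.mem_singleton] at this
    rcases this with h | h
    · exact hxw1 h.symm
    · exact hyw1 h.symm
  have hw3w1 : w3 ≠ w1 := by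
    intro e
    rw [e, hw1] at hw3
    have : u ∈ ({x, y} : Finset V) := by rw [← hw3]; simp
    simp only [Finset.mem_insert, Finset.mem_singleton] at this
    rcases this with h | h
    · exact hxu h.symm
    · exact hyu h.symm
  have hw3v : w3 ≠ v := by
    intro e
    have hw1Hv : w1 ∈ Hnb G v := Hnb_symm.mp hvHw1
    rw [← e, hw3] at hw1Hv
    simp only [Finset.mem_insert, Finset.mem_singleton] at hw1Hv
    rcases hw1Hv with h | h
    · exact hxw1 h.symm
    · exact hyw1 h.symm
  have hw3v1 : w3 ≠ v1 := by
    intro e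
    have huHv1 : u ∈ Hnb G v1 := Hnb_symm.mp hv1Hu
    rw [← e, hw3] at huHv1
    simp only [Finset.mem_insert, Finset.mem_singleton] at huHv1
    rcases huHv1 with h | h
    · exact hxu h.symm
    · exact hyu h.symm
  -- seven distinct vertices in a six element type
  have hcard7 : ({w3, y, x, v1, w1, v, u} : Finset V).card = 7 := by
    rw [Finset.card_insert_of_notMem (by
        simp only [Finset.mem_insert, Finset.mem_singleton]
        push_neg
        exact ⟨hw3y, hw3x, hw3v1, hw3w1, hw3v, hw3u⟩),
      Finset.card_insert_of_notMem (by
        simp only [Finset.mem_insert, Finset.mem_singleton]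
        push_neg
        exact ⟨fun e => hxy e.symm, hyv1, hyw1, hyv, hyu⟩),
      Finset.card_insert_of_notMem (by
        simp only [Finset.mem_insert, Finset.mem_singleton]
        push_neg
        exact ⟨hxv1, hxw1, hxv, hxu⟩),
      Finset.card_insert_of_notMem (by
        simp only [Finset.mem_insert, Finset.mem_singleton]
        push_neg
        exact ⟨fun e => hw1v1ne e.symm, hv1v, hv1u⟩),
      Finset.card_insert_of_notMem (by
        simp only [Finset.mem_insert, Finset.mem_singleton]
        push_neg
        exact ⟨hw1v, hw1u⟩),
      Finset.card_insert_of_notMem (by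
        simp only [Finset.mem_singleton]
        exact fun e => huvne e.symm),
      Finset.card_singleton]
  have := Finset.card_le_univ ({w3, y, x, v1, w1, v, u} : Finset V)
  rw [hcard7, hn] at this
  omega

lemma M5 (hBsub : ↑B ⊆ G.edgeSet) (hn : Fintype.card V = n) (h5 : 5 ≤ n)
    (hreg : G.IsRegularOfDegree (n - 3)) (h6 : n = 6) (hall1 : ∀ v : V, bdeg B v = 1)
    (hP : ∀ u v : V, u ≠ v → (NF G B u ∩ NF G B v).Nonempty) : False := by
  have : Nonempty V := by
    have : 0 < Fintype.card V := by omega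
    exact Fintype.card_pos_iff.mp this
  obtain ⟨u⟩ := this
  obtain ⟨pu, hpu⟩ := partner_exists hall1 u
  have hupuB : s(u, pu) ∈ B := mem_Bnb.mp (by rw [hpu]; simp)
  obtain ⟨w1, hw1⟩ := commonH hBsub hn h5 hreg hall1 hP hupuB
  obtain ⟨v1, hv1⟩ := partner_exists hall1 w1
  have hw1v1B : s(w1, v1) ∈ B := mem_Bnb.mp (by rw [hv1]; simp)
  obtain ⟨w2, hw2⟩ := commonH hBsub hn h5 hreg hall1 hP hw1v1B
  have hw1Hw2 : w1 ∈ Hnb G w2 := by rw [hw2]; simp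
  have hw2Hw1 : w2 ∈ Hnb G w1 := Hnb_symm.mp hw1Hw2
  rw [hw1] at hw2Hw1
  simp only [Finset.mem_insert, Finset.mem_singleton] at hw2Hw1
  rcases hw2Hw1 with rfl | rfl
  · exact L6core hBsub hn h5 hreg h6 hall1 hP hupuB hw1v1B hw1 hw2
  · exact L6core hBsub hn h5 hreg h6 hall1 hP (swap_mem hupuB) hw1v1B
      (by rw [hw1, Finset.pair_comm]) hw2

end Six

section NoP
variable {G : SimpleGraph V} [DecidableRel G.Adj] {B : Finset (Sym2 V)} {n : ℕ}

lemma noP (hBsub : ↑B ⊆ G.edgeSet) (hn : Fintype.card V = n) (h5 : 5 ≤ n)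
    (hreg : G.IsRegularOfDegree (n - 3))
    (hall : ∀ v : V, 1 ≤ bdeg B v) (hm : B.card ≤ n - 3)
    (hP : ∀ u v : V, u ≠ v → (NF G B u ∩ NF G B v).Nonempty) : False := by
  have h2m : ∑ v, bdeg B v = 2 * B.card := sum_bdeg hBsub
  have hcovn : n ≤ ∑ v, bdeg B v := by
    calc n = ∑ _v : V, 1 := by rw [← hn]; simp
    _ ≤ _ := Finset.sum_le_sum (fun i _ => hall i)
  have hb2 := M3 hBsub hn h5 hreg hP hall hm
  set B2 : Finset V := univ.filter (fun z => bdeg B z = 2) with hB2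
  set S : Finset V := univ.filter (fun z => bdeg B z = 1) with hS
  have hSmem : ∀ z, z ∈ S ↔ bdeg B z = 1 := fun z => by simp [hS]
  have hB2mem : ∀ z, z ∈ B2 ↔ bdeg B z = 2 := fun z => by simp [hB2]
  have hdisj : Disjoint S B2 := by
    rw [Finset.disjoint_left]
    intro z hz hz'
    rw [hSmem] at hz
    rw [hB2mem] at hz'
    omega
  have hunion : S ∪ B2 = univ := by
    ext z
    simp only [Finset.mem_union, Finset.mem_univ, iff_true, hSmem, hB2mem]
    have h1 := hall z
    have h2 := hb2 z
    omega
  have hpart : S.card + B2.card = n := by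
    rw [← Finset.card_union_of_disjoint hdisj, hunion, Finset.card_univ, hn]
  have hsum2 : ∑ v, bdeg B v = S.card + 2 * B2.card := by
    rw [← hunion, Finset.sum_union hdisj]
    have h1 : ∑ v ∈ S, bdeg B v = S.card := by
      rw [Finset.sum_congr rfl (fun x hx => (hSmem x).mp hx)]
      simp
    have h2 : ∑ v ∈ B2, bdeg B v = 2 * B2.card := by
      rw [Finset.sum_congr rfl (fun x hx => (hB2mem x).mp hx)]
      rw [Finset.sum_const, smul_eq_mul, mul_comm]
    rw [h1, h2]
  -- key inequality for vertices of S
  have hkey : ∀ u ∈ S, n ≤ 6 + (NF G B u ∩ B2).card := by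
    intro u huS
    have hu1 : bdeg B u = 1 := (hSmem u).mp huS
    have hM2 := M2 hBsub hn h5 hreg hP hu1
    have hNFc : (NF G B u).card = 3 := by rw [card_NF hBsub hn h5 hreg, hu1]
    have hsplit : ∑ w ∈ NF G B u, bdeg B w
        = (NF G B u).card + (NF G B u ∩ B2).card := by
      have hpt : ∀ w ∈ NF G B u, bdeg B w = 1 + (if w ∈ B2 then 1 else 0) := by
        intro w _
        by_cases hw : w ∈ B2
        · rw [if_pos hw, (hB2mem w).mp hw]
        · rw [if_neg hw]
          have h1 := hall w
          have h2 := hb2 w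
          have h3 : bdeg B w ≠ 2 := fun e => hw ((hB2mem w).mpr e)
          omega
      rw [Finset.sum_congr rfl hpt, Finset.sum_add_distrib]
      congr 1
      · simp
      · rw [Finset.sum_ite_mem]
        simp
    omega
  -- double counting
  have hdc : ∑ u ∈ S, (NF G B u ∩ B2).card = ∑ z ∈ B2, (NF G B z ∩ S).card := by
    have lhs : ∀ T : Finset V, ∀ u : V, (NF G B u ∩ T).card
        = ∑ z ∈ T, (if z ∈ NF G B u then 1 else 0) := by
      intro T u
      rw [Finset.sum_ite_mem]
      rw [Finset.inter_comm]
      simp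
    calc ∑ u ∈ S, (NF G B u ∩ B2).card
        = ∑ u ∈ S, ∑ z ∈ B2, (if z ∈ NF G B u then 1 else 0) := by
          exact Finset.sum_congr rfl (fun u _ => lhs B2 u)
    _ = ∑ z ∈ B2, ∑ u ∈ S, (if z ∈ NF G B u then 1 else 0) := Finset.sum_comm
    _ = ∑ z ∈ B2, ∑ u ∈ S, (if u ∈ NF G B z then 1 else 0) := by
          refine Finset.sum_congr rfl (fun z _ => Finset.sum_congr rfl (fun u _ => ?_))
          by_cases h : z ∈ NF G B u
          · rw [if_pos h, if_pos (NF_symm.mp h)]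
          · rw [if_neg h, if_neg (fun h' => h (NF_symm.mp h'))]
    _ = ∑ z ∈ B2, (NF G B z ∩ S).card := by
          exact Finset.sum_congr rfl (fun z _ => (lhs S z).symm)
  have hub : ∀ z ∈ B2, (NF G B z ∩ S).card ≤ 4 := by
    intro z hz
    calc (NF G B z ∩ S).card ≤ (NF G B z).card :=
          Finset.card_le_card Finset.inter_subset_left
    _ = 4 := by rw [card_NF hBsub hn h5 hreg, (hB2mem z).mp hz]
  have hchain : S.card * (n - 6) ≤ 4 * B2.card := by
    calc S.card * (n - 6) = ∑ _u ∈ S, (n - 6) := by rw [Finset.sum_const, smul_eq_mul]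
    _ ≤ ∑ u ∈ S, (NF G B u ∩ B2).card :=
          Finset.sum_le_sum (fun u hu => by have := hkey u hu; omega)
    _ = ∑ z ∈ B2, (NF G B z ∩ S).card := hdc
    _ ≤ ∑ _z ∈ B2, 4 := Finset.sum_le_sum hub
    _ = 4 * B2.card := by rw [Finset.sum_const, smul_eq_mul, mul_comm]
  -- conclude n = 6 and all degrees 1
  have hB2small : B2.card ≤ n - 6 := by omega
  have hS6 : 6 ≤ S.card := by omega
  have hn6 : n = 6 := by
    by_contra hne6
    have h7 : 7 ≤ n := by omega
    have : 6 * (n - 6) ≤ S.card * (n - 6) := Nat.mul_le_mul_right _ hS6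
    have : 6 * (n - 6) ≤ 4 * (n - 6) := by
      calc 6 * (n - 6) ≤ S.card * (n - 6) := Nat.mul_le_mul_right _ hS6
      _ ≤ 4 * B2.card := hchain
      _ ≤ 4 * (n - 6) := Nat.mul_le_mul_left _ hB2small
    omega
  have hB20 : B2.card = 0 := by omega
  have hall1 : ∀ v : V, bdeg B v = 1 := by
    intro v
    have h1 := hall v
    have h2 := hb2 v
    have h3 : v ∉ B2 := by
      rw [Finset.card_eq_zero] at hB20
      rw [hB20]
      exact Finset.notMem_empty v
    have h4 : bdeg B v ≠ 2 := fun e => h3 ((hB2mem v).mpr e)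
    omega
  exact M5 hBsub hn h5 hreg hn6 hall1 hP

end NoP

section Final
variable {G : SimpleGraph V} [DecidableRel G.Adj] {B : Finset (Sym2 V)} {n : ℕ}

lemma bondage_lower (hBsub : ↑B ⊆ G.edgeSet) (hn : Fintype.card V = n) (h5 : 5 ≤ n)
    (hreg : G.IsRegularOfDegree (n - 3)) (hBle : B.card ≤ n - 3) :
    romanDominationNumber (G.deleteEdges ↑B) ≤ 4 := by
  show romanDominationNumber (Gdel G B) ≤ 4
  by_cases hall : ∀ v : V, 1 ≤ bdeg B v
  · by_cases hP : ∀ u v : V, u ≠ v → (NF G B u ∩ NF G B v).Nonempty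
    · exact (noP hBsub hn h5 hreg hall hBle hP).elim
    · push_neg at hP
      obtain ⟨u, v, huv, hemp⟩ := hP
      refine rdn_le_four_two_two (Gdel G B) u v huv ?_
      intro x hxu hxv
      by_contra hc
      push_neg at hc
      have hx1 : x ∈ NF G B u := by
        rw [mem_NF]
        refine ⟨hxu, ?_⟩
        have := hc.1
        rw [Gdel_adj] at this
        tauto
      have hx2 : x ∈ NF G B v := by
        rw [mem_NF]
        refine ⟨hxv, ?_⟩
        have := hc.2
        rw [Gdel_adj] at this
        tauto
      exact (Finset.not_nonempty_iff_eq_empty.mpr hemp) ⟨x, Finset.mem_inter.mpr ⟨hx1, hx2⟩⟩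
  · push_neg at hall
    obtain ⟨v, hv⟩ := hall
    have hv0 : Bnb B v = ∅ := by
      rw [← Finset.card_eq_zero]
      have : bdeg B v = 0 := by omega
      exact this
    obtain ⟨a, b, hab, hH⟩ := Hnb_pair G hn h5 hreg v
    have ha : a ∈ Hnb G v := by rw [hH]; simp
    have hb : b ∈ Hnb G v := by rw [hH]; simp
    refine rdn_le_four_two_one_one (Gdel G B) v a b hab (mem_Hnb.mp ha).1 (mem_Hnb.mp hb).1 ?_
    intro x hxv hxa hxb
    rw [Gdel_adj]
    constructor
    · by_contra hadj
      have : x ∈ Hnb G v := mem_Hnb.mpr ⟨hxv, hadj⟩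
      rw [hH] at this
      simp only [Finset.mem_insert, Finset.mem_singleton] at this
      tauto
    · intro hB
      have : x ∈ Bnb B v := mem_Bnb.mpr hB
      rw [hv0] at this
      exact Finset.notMem_empty x this

end Final

end RB

/-- An `(n-3)`-regular graph of order `n ≥ 5` that is not a complete multipartite
graph all of whose parts have size `3` has Roman bondage number `n - 2`. -/
theorem roman_bondage_of_regular
    {V : Type*} [Fintype V] [DecidableEq V] (G : SimpleGraph V) [DecidableRel G.Adj]
    (n : ℕ) (hn : Fintype.card V = n) (h5 : 5 ≤ n)
    (hreg : G.IsRegularOfDegree (n - 3))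
    (hK : ¬ ∃ t : ℕ, Nonempty (G ≃g completeMultipartiteGraph (fun _ : Fin t => Fin 3))) :
    romanBondageNumber G = n - 2 := by
  set Sb : Set ℕ := {k | ∃ B : Finset (Sym2 V), ↑B ⊆ G.edgeSet ∧ B.card = k ∧
    romanDominationNumber G < romanDominationNumber (G.deleteEdges ↑B)} with hSb
  have hmem : (n - 2) ∈ Sb := by
    obtain ⟨B, hsub, hcard, hlt⟩ := RB.bondage_upper G hn h5 hreg hK
    exact ⟨B, hsub, hcard, hlt⟩
  have hlb : ∀ k ∈ Sb, n - 2 ≤ k := by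
    rintro k ⟨B, hsub, hcard, hlt⟩
    by_contra hk
    push_neg at hk
    have hk3 : B.card ≤ n - 3 := by omega
    have h4 := RB.bondage_lower hsub hn h5 hreg hk3
    rw [RB.rdn_eq_four G hn h5 hreg] at hlt
    omega
  have : romanBondageNumber G = sInf Sb := rfl
  rw [this]
  refine le_antisymm (Nat.sInf_le hmem) (hlb _ (Nat.sInf_mem ⟨_, hmem⟩))
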